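/- Let A be a nonzero free abelian group of finite rank and H a nontrivial finite group acting faithfully on A by automorphisms. Let [H,A] be the subgroup of A generated by all elements ʰa − a for a ∈ A, h ∈ H. Then [H,A] ≠ 0, [H,A] is an H-submodule of A, and H acts faithfully on [H,A]. -/

import Mathlib

namespace YBPaper

/-- if a nontrivial finite group `H` acts faithfully on a nonzero free
abelian group `A` of finite rank, then `[H,A] = ⟨ʰa - a⟩` is nonzero, is an
`H`-submodule, and `H` acts faithfully on it. -/
theorem stmt12 {A H : Type*} [AddCommGroup A] [Module.Free ℤ A] [Module.Finite ℤ A]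
    [Nontrivial A] [Group H] [Finite H] [Nontrivial H]
    [DistribMulAction H A] [FaithfulSMul H A] :
    AddSubgroup.closure {x : A | ∃ (h : H) (a : A), x = h • a - a} ≠ ⊥ ∧
    (∀ (h : H), ∀ x ∈ AddSubgroup.closure {x : A | ∃ (h : H) (a : A), x = h • a - a},
        h • x ∈ AddSubgroup.closure {x : A | ∃ (h : H) (a : A), x = h • a - a}) ∧
    (∀ h : H,
      (∀ x ∈ AddSubgroup.closure {x : A | ∃ (h : H) (a : A), x = h • a - a}, h • x = x) →
      h = 1) := by
  set S := {x : A | ∃ (h : H) (a : A), x = h • a - a} with hS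
  have hmem : ∀ (g : H) (a : A), g • a - a ∈ AddSubgroup.closure S := fun g a =>
    AddSubgroup.subset_closure ⟨g, a, rfl⟩
  refine ⟨?_, ?_, ?_⟩
  · obtain ⟨h, hh⟩ := exists_ne (1 : H)
    have hex : ∃ a : A, h • a ≠ a := by
      by_contra hcon
      push_neg at hcon
      exact hh (eq_of_smul_eq_smul (fun a : A => by simp [hcon a]))
    obtain ⟨a, ha⟩ := hex
    intro hbot
    have h2 : h • a - a ∈ (⊥ : AddSubgroup A) := hbot ▸ hmem h a
    rw [AddSubgroup.mem_bot, sub_eq_zero] at h2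
    exact ha h2
  · intro h x hx
    induction hx using AddSubgroup.closure_induction with
    | mem x hx =>
      obtain ⟨g, a, rfl⟩ := hx
      have : h • (g • a - a) = ((h * g) • a - a) - (h • a - a) := by
        rw [smul_sub, mul_smul]; abel
      rw [this]
      exact sub_mem (hmem _ _) (hmem _ _)
    | zero => simpa using (AddSubgroup.closure S).zero_mem
    | add x y _ _ hx hy => simpa [smul_add] using add_mem hx hy
    | neg x _ hx => simpa [smul_neg] using neg_mem hx
  · intro h hfix
    apply eq_of_smul_eq_smul (α := A)
    intro a
    simp only [one_smul]
    set d := h • a - a with hd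
    have hfd : h • d = d := hfix d (hmem h a)
    have key : ∀ n : ℕ, h ^ n • a = a + n • d := by
      intro n
      induction n with
      | zero => simp
      | succ n ih =>
        have hns : h • (n • d) = n • d := by
          rw [smul_comm, hfd]
        rw [pow_succ', mul_smul, ih, smul_add, hns, succ_nsmul, hd]
        abel
    have h0 : (orderOf h : ℤ) • d = 0 := by
      have hk := key (orderOf h)
      rw [pow_orderOf_eq_one, one_smul, left_eq_add] at hk
      rw [natCast_zsmul, hk]
    have hne : (orderOf h : ℤ) ≠ 0 := by
      exact_mod_cast (orderOf_pos h).ne'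
    have hdz : d = 0 := by
      rcases smul_eq_zero.mp h0 with h' | h'
      · exact absurd h' hne
      · exact h'
    rw [hd, sub_eq_zero] at hdz
    exact hdz


end YBPaper
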